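/- Choice of eigenbasis with definite parity (existence): let H be a real symmetric N×N matrix with cospectral vertices u, v, i.e., (H^k)_{uu} = (H^k)_{vv} for all k ∈ ℕ. Then there exists an orthonormal eigenbasis {φ^ν} of H such that for every ν, (φ^ν)_u = (φ^ν)_v or (φ^ν)_u = −(φ^ν)_v, and moreover for each eigenvalue λ there is at most one basis eigenvector with eigenvalue λ satisfying (φ)_u = (φ)_v ≠ 0 and at most one satisfying (φ)_u = −(φ)_v ≠ 0. -/

import Mathlib

open Module Set

local notation "⟪" x ", " y "⟫" => inner (𝕜 := ℝ) x y

variable {E : Type*} [NormedAddCommGroup E] [InnerProductSpace ℝ E] [FiniteDimensional ℝ E]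

omit [FiniteDimensional ℝ E] in
lemma coe_onb (W : Submodule ℝ E) {ι : Type*} (b : ι → ↥W) (hb : Orthonormal ℝ b) :
    Orthonormal ℝ fun i => ((b i : E)) :=
  hb.comp_linearIsometry W.subtypeₗᵢ

/-- one prescribed vector -/
lemma helper1 (W : Submodule ℝ E) {m : ℕ} (hm : finrank ℝ ↥W = m) (e : E) (he : e ∈ W) :
    ∃ φ : Fin m → E, (∀ i, φ i ∈ W) ∧ Orthonormal ℝ φ ∧
      (∀ i j, i ≠ j → ⟪e, φ i⟫ ≠ 0 → ⟪e, φ j⟫ = 0) := by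
  by_cases h0 : e = 0
  · obtain ⟨b⟩ : Nonempty (OrthonormalBasis (Fin m) ℝ ↥W) :=
      ⟨(stdOrthonormalBasis ℝ ↥W).reindex (finCongr hm)⟩
    exact ⟨fun i => (b i : E), fun i => (b i).2, coe_onb W b b.orthonormal,
      fun i j _ _ => by simp [h0]⟩
  · have hnt : Nontrivial ↥W := ⟨⟨e, he⟩, 0, by simpa using h0⟩
    have hm1 : 1 ≤ m := hm ▸ Module.finrank_pos
    have hcard : finrank ℝ ↥W = Fintype.card (Fin m) := by simpa using hm
    have hnorm : ‖e‖ ≠ 0 := norm_ne_zero_iff.mpr h0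
    set e' : ↥W := (‖e‖ : ℝ)⁻¹ • ⟨e, he⟩ with he'
    have hne' : ‖e'‖ = 1 := by
      rw [he', norm_smul]
      have : ‖(⟨e, he⟩ : ↥W)‖ = ‖e‖ := rfl
      rw [this]; simp [hnorm]
    set z : Fin m := ⟨0, hm1⟩ with hz
    have hon : Orthonormal ℝ (({z} : Set (Fin m)).restrict (fun _ => e')) := by
      constructor
      · intro i; exact hne'
      · intro i j hij; exact absurd (Subsingleton.elim i j) hij
    obtain ⟨b, hb⟩ := hon.exists_orthonormalBasis_extension_of_card_eq hcard
    have hbz : (b z : E) = ‖e‖⁻¹ • e := by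
      rw [hb z (by simp)]; rfl
    have key : ∀ j, j ≠ z → ⟪e, ((b j : ↥W) : E)⟫ = 0 := by
      intro j hjz
      have h1 : ⟪(b z : E), (b j : E)⟫ = 0 := by
        have := b.orthonormal.2 (Ne.symm hjz)
        simpa [Submodule.coe_inner] using this
      have : e = ‖e‖ • (b z : E) := by rw [hbz]; simp [smul_smul, hnorm]
      rw [this]
      simp [inner_smul_left, h1]
    refine ⟨fun i => (b i : E), fun i => (b i).2, coe_onb W b b.orthonormal, ?_⟩
    intro i j hij hne
    by_cases hjz : j = z
    · exact absurd (key i (fun h => hij (h.trans hjz.symm))) hne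
    · exact key j hjz

/-- Core: orthonormal family adapted to two orthogonal functional vectors. -/
lemma core (W : Submodule ℝ E) {m : ℕ} (hm : finrank ℝ ↥W = m) (c d : E)
    (hc : c ∈ W) (hd : d ∈ W) (hcd : ⟪c, d⟫ = 0) :
    ∃ φ : Fin m → E, (∀ i, φ i ∈ W) ∧ Orthonormal ℝ φ ∧
      (∀ i, ⟪c, φ i⟫ = 0 ∨ ⟪d, φ i⟫ = 0) ∧
      (∀ i j, i ≠ j → ⟪c, φ i⟫ ≠ 0 → ⟪c, φ j⟫ = 0) ∧
      (∀ i j, i ≠ j → ⟪d, φ i⟫ ≠ 0 → ⟪d, φ j⟫ = 0) := by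
  by_cases hc0 : c = 0
  · obtain ⟨φ, h1, h2, h3⟩ := helper1 W hm d hd
    exact ⟨φ, h1, h2, fun i => Or.inl (by simp [hc0]), fun i j _ _ => by simp [hc0], h3⟩
  by_cases hd0 : d = 0
  · obtain ⟨φ, h1, h2, h3⟩ := helper1 W hm c hc
    exact ⟨φ, h1, h2, fun i => Or.inr (by simp [hd0]), h3, fun i j _ _ => by simp [hd0]⟩
  -- both nonzero
  have hnc : ‖c‖ ≠ 0 := norm_ne_zero_iff.mpr hc0
  have hnd : ‖d‖ ≠ 0 := norm_ne_zero_iff.mpr hd0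
  set c' : ↥W := (‖c‖ : ℝ)⁻¹ • ⟨c, hc⟩ with hc'
  set d' : ↥W := (‖d‖ : ℝ)⁻¹ • ⟨d, hd⟩ with hd'
  have hncE : ‖(⟨c, hc⟩ : ↥W)‖ = ‖c‖ := rfl
  have hndE : ‖(⟨d, hd⟩ : ↥W)‖ = ‖d‖ := rfl
  have hnc' : ‖c'‖ = 1 := by rw [hc', norm_smul, hncE]; simp [hnc]
  have hnd' : ‖d'‖ = 1 := by rw [hd', norm_smul, hndE]; simp [hnd]
  have hinner : ⟪c', d'⟫ = 0 := by
    rw [hc', hd']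
    have : ⟪(⟨c, hc⟩ : ↥W), (⟨d, hd⟩ : ↥W)⟫ = ⟪c, d⟫ := rfl
    rw [inner_smul_left, inner_smul_right, this, hcd]
    ring
  have hpair : Orthonormal ℝ (![c', d'] : Fin 2 → ↥W) := by
    constructor
    · intro i
      fin_cases i
      · exact hnc'
      · exact hnd'
    · intro i j hij
      fin_cases i <;> fin_cases j
      · exact absurd rfl hij
      · exact hinner
      · show ⟪d', c'⟫ = 0
        rw [real_inner_comm]; exact hinner
      · exact absurd rfl hij
  have hm2 : 2 ≤ m := by
    have := hpair.linearIndependent.fintype_card_le_finrank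
    simpa [hm] using this
  set z0 : Fin m := ⟨0, by omega⟩ with hz0
  set z1 : Fin m := ⟨1, by omega⟩ with hz1
  have hz01 : z0 ≠ z1 := by simp [hz0, hz1, Fin.ext_iff]
  set vv : Fin m → ↥W := fun i => if i = z0 then c' else d' with hvv
  have hvz0 : vv z0 = c' := by rw [hvv]; simp
  have hvz1 : vv z1 = d' := by rw [hvv]; simp [hz01.symm]
  have hcard : finrank ℝ ↥W = Fintype.card (Fin m) := by simpa using hm
  have hon : Orthonormal ℝ (({z0, z1} : Set (Fin m)).restrict vv) := by
    constructor
    · rintro ⟨i, hi⟩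
      simp only [Set.mem_insert_iff, Set.mem_singleton_iff] at hi
      rcases hi with h | h <;> subst h
      · show ‖vv z0‖ = 1; rw [hvz0]; exact hnc'
      · show ‖vv z1‖ = 1; rw [hvz1]; exact hnd'
    · rintro ⟨i, hi⟩ ⟨j, hj⟩ hij
      have hij' : i ≠ j := fun h => hij (Subtype.ext h)
      simp only [Set.mem_insert_iff, Set.mem_singleton_iff] at hi hj
      show ⟪vv i, vv j⟫ = 0
      rcases hi with h | h <;> rcases hj with h' | h' <;> subst h <;> subst h'
      · exact absurd rfl hij'
      · rw [hvz0, hvz1]; exact hinner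
      · rw [hvz0, hvz1, real_inner_comm]; exact hinner
      · exact absurd rfl hij'
  obtain ⟨b, hb⟩ := hon.exists_orthonormalBasis_extension_of_card_eq hcard
  have hbz0 : (b z0 : E) = ‖c‖⁻¹ • c := by
    rw [hb z0 (by simp), hvz0]; rfl
  have hbz1 : (b z1 : E) = ‖d‖⁻¹ • d := by
    rw [hb z1 (by simp), hvz1]; rfl
  have hceq : c = ‖c‖ • (b z0 : E) := by rw [hbz0]; simp [smul_smul, hnc]
  have hdeq : d = ‖d‖ • (b z1 : E) := by rw [hbz1]; simp [smul_smul, hnd]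
  have keyc : ∀ j, j ≠ z0 → ⟪c, ((b j : ↥W) : E)⟫ = 0 := by
    intro j hj
    have h1 : ⟪(b z0 : E), (b j : E)⟫ = 0 := by
      have := b.orthonormal.2 (Ne.symm hj)
      simpa [Submodule.coe_inner] using this
    rw [hceq, inner_smul_left]
    simp [h1]
  have keyd : ∀ j, j ≠ z1 → ⟪d, ((b j : ↥W) : E)⟫ = 0 := by
    intro j hj
    have h1 : ⟪(b z1 : E), (b j : E)⟫ = 0 := by
      have := b.orthonormal.2 (Ne.symm hj)
      simpa [Submodule.coe_inner] using this
    rw [hdeq, inner_smul_left]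
    simp [h1]
  refine ⟨fun i => (b i : E), fun i => (b i).2, coe_onb W b b.orthonormal, ?_, ?_, ?_⟩
  · intro i
    by_cases h : i = z0
    · exact Or.inr (keyd i (h ▸ hz01))
    · exact Or.inl (keyc i h)
  · intro i j hij hne
    by_cases hjz : j = z0
    · refine absurd (keyc i (fun h => hij (h.trans hjz.symm))) hne
    · exact keyc j hjz
  · intro i j hij hne
    by_cases hjz : j = z1
    · refine absurd (keyd i (fun h => hij (h.trans hjz.symm))) hne
    · exact keyd j hjz

lemma spec {N : ℕ} (H : Matrix (Fin N) (Fin N) ℝ)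
    (ψ : OrthonormalBasis (Fin N) ℝ (EuclideanSpace ℝ (Fin N))) (lam : Fin N → ℝ)
    (heig : ∀ ν, H.mulVec ⇑(ψ ν) = lam ν • ⇑(ψ ν)) (k : ℕ) (w : Fin N) :
    (H ^ k) w w = ∑ ν, lam ν ^ k * (ψ ν w * ψ ν w) := by
  have hpow : ∀ ν, (H ^ k).mulVec ⇑(ψ ν) = lam ν ^ k • ⇑(ψ ν) := by
    intro ν
    induction k with
    | zero => simp [Matrix.one_mulVec]
    | succ k ih =>
        rw [pow_succ, ← Matrix.mulVec_mulVec, heig, Matrix.mulVec_smul, ih,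
          smul_smul, pow_succ, mul_comm]
  -- expand the w-th unit vector in the basis ψ
  have hrep : (Pi.single w 1 : Fin N → ℝ) = ∑ ν, ψ ν w • ⇑(ψ ν) := by
    have h1 : (EuclideanSpace.single w (1:ℝ)) = ∑ ν, ψ ν w • ψ ν := by
      rw [← ψ.sum_repr' (EuclideanSpace.single w (1:ℝ))]
      congr 1; ext ν
      rw [EuclideanSpace.inner_single_right]
      simp
    have := congrArg (fun x : EuclideanSpace ℝ (Fin N) => (x : Fin N → ℝ)) h1
    simpa using this
  have hcol : (H ^ k) w w = ((H ^ k).mulVec (Pi.single w 1)) w := by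
    rw [Matrix.mulVec_single]
    simp
  rw [hcol, hrep]
  have : (H ^ k).mulVec (∑ ν, ψ ν w • ⇑(ψ ν)) = ∑ ν, ψ ν w • (lam ν ^ k • ⇑(ψ ν)) := by
    rw [show (H ^ k).mulVec (∑ ν, ψ ν w • ⇑(ψ ν))
        = (H ^ k).mulVecLin (∑ ν, ψ ν w • ⇑(ψ ν)) from rfl, map_sum]
    refine Finset.sum_congr rfl fun ν _ => ?_
    rw [map_smul]
    exact congrArg (fun x => ψ ν w • x) (hpow ν)
  rw [this]
  rw [Finset.sum_apply]
  refine Finset.sum_congr rfl fun ν _ => ?_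
  simp [mul_comm, mul_left_comm]

lemma vand {N : ℕ} (lam : Fin N → ℝ) (cc : Fin N → ℝ)
    (hsum : ∀ k : ℕ, ∑ ν, lam ν ^ k * cc ν = 0) (ν₀ : Fin N) :
    ∑ ν ∈ Finset.univ.filter (fun ν => lam ν = lam ν₀), cc ν = 0 := by
  have hpoly : ∀ p : Polynomial ℝ, ∑ ν, p.eval (lam ν) * cc ν = 0 := by
    intro p
    have h1 : ∀ ν : Fin N, p.eval (lam ν) * cc ν
        = ∑ k ∈ Finset.range (p.natDegree + 1), p.coeff k * (lam ν ^ k * cc ν) := by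
      intro ν
      rw [Polynomial.eval_eq_sum_range, Finset.sum_mul]
      exact Finset.sum_congr rfl fun k _ => by ring
    rw [Finset.sum_congr rfl fun ν _ => h1 ν, Finset.sum_comm]
    rw [Finset.sum_congr rfl fun k _ => (Finset.mul_sum _ _ _).symm]
    rw [Finset.sum_congr rfl fun k (_ : k ∈ Finset.range (p.natDegree + 1)) =>
      by rw [hsum k, mul_zero]]
    exact Finset.sum_const_zero
  set s : Finset ℝ := Finset.image lam Finset.univ with hs
  have hinj : Set.InjOn id (↑s : Set ℝ) := fun a _ b _ h => h
  have hmem : lam ν₀ ∈ s := Finset.mem_image_of_mem lam (Finset.mem_univ ν₀)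
  set p := Lagrange.basis s id (lam ν₀) with hp
  have heval : ∀ ν : Fin N, p.eval (lam ν) = if lam ν = lam ν₀ then 1 else 0 := by
    intro ν
    by_cases h : lam ν = lam ν₀
    · rw [if_pos h, h]
      exact Lagrange.eval_basis_self hinj hmem
    · rw [if_neg h]
      exact Lagrange.eval_basis_of_ne (v := id) (i := lam ν₀) (j := lam ν)
        (fun hh => h hh.symm) (Finset.mem_image_of_mem lam (Finset.mem_univ ν))
  have := hpoly p
  rw [Finset.sum_congr rfl fun ν _ => by rw [heval ν]] at this
  have h2 : (∑ ν ∈ Finset.univ.filter (fun ν => lam ν = lam ν₀), cc ν)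
      = ∑ ν, (if lam ν = lam ν₀ then 1 else 0) * cc ν := by
    rw [Finset.sum_filter]
    exact Finset.sum_congr rfl fun ν _ => by split <;> simp
  rw [h2]
  exact this

theorem stmt15 {N : ℕ} (H : Matrix (Fin N) (Fin N) ℝ) (hsymm : H.IsSymm)
    (u v : Fin N)
    (hcosp : ∀ k : ℕ, (H ^ k) u u = (H ^ k) v v) :
    ∃ (φ : Fin N → (Fin N → ℝ)) (lam : Fin N → ℝ),
      (∀ ν μ : Fin N, dotProduct (φ ν) (φ μ) = if ν = μ then 1 else 0) ∧
      (∀ ν : Fin N, H.mulVec (φ ν) = lam ν • φ ν) ∧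
      (∀ ν : Fin N, φ ν u = φ ν v ∨ φ ν u = -(φ ν v)) ∧
      (∀ ν μ : Fin N, ν ≠ μ → lam ν = lam μ →
        (φ ν u = φ ν v ∧ φ ν u ≠ 0) → ¬(φ μ u = φ μ v ∧ φ μ u ≠ 0)) ∧
      (∀ ν μ : Fin N, ν ≠ μ → lam ν = lam μ →
        (φ ν u = -(φ ν v) ∧ φ ν u ≠ 0) → ¬(φ μ u = -(φ μ v) ∧ φ μ u ≠ 0)) := by
  classical
  have hH : H.IsHermitian := by
    rw [Matrix.IsHermitian, Matrix.conjTranspose_eq_transpose_of_trivial]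
    exact hsymm
  set ψ := hH.eigenvectorBasis with hψ
  set lam := hH.eigenvalues with hlam
  have heig : ∀ ν, H.mulVec ⇑(ψ ν) = lam ν • ⇑(ψ ν) := fun ν => hH.mulVec_eigenvectorBasis ν
  set cc : Fin N → ℝ := fun ν => ψ ν u * ψ ν u - ψ ν v * ψ ν v with hcc
  have hsum : ∀ k : ℕ, ∑ ν, lam ν ^ k * cc ν = 0 := by
    intro k
    have h1 : ∀ ν : Fin N, lam ν ^ k * cc ν
        = lam ν ^ k * (ψ ν u * ψ ν u) - lam ν ^ k * (ψ ν v * ψ ν v) := fun ν => by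
      rw [hcc]; ring
    rw [Finset.sum_congr rfl fun ν _ => h1 ν, Finset.sum_sub_distrib,
      ← spec H ψ lam heig k u, ← spec H ψ lam heig k v, hcosp k, sub_self]
  have hclass : ∀ l : ℝ, ∑ ν ∈ Finset.univ.filter (fun ν => lam ν = l), cc ν = 0 := by
    intro l
    by_cases h : ∃ ν₀, lam ν₀ = l
    · obtain ⟨ν₀, rfl⟩ := h
      exact vand lam cc hsum ν₀
    · rw [Finset.filter_false_of_mem (fun ν _ hν => h ⟨ν, hν⟩)]
      exact Finset.sum_empty
  -- class data
  set C : ℝ → Finset (Fin N) := fun l => Finset.univ.filter (fun ν => lam ν = l) with hC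
  set m : ℝ → ℕ := fun l => (C l).card with hm
  set W : ℝ → Submodule ℝ (EuclideanSpace ℝ (Fin N)) :=
    fun l => Submodule.span ℝ (⇑ψ '' ↑(C l)) with hW
  have hmemC : ∀ (l : ℝ) (ν : Fin N), ν ∈ C l ↔ lam ν = l := by
    intro l ν; simp [hC]
  have hrank : ∀ l, finrank ℝ ↥(W l) = m l := by
    intro l
    have hres : Orthonormal ℝ (fun ν : ↥(↑(C l) : Set (Fin N)) => ψ ν.1) :=
      ψ.orthonormal.comp _ Subtype.val_injective
    have hli := hres.linearIndependent
    have hsp : Set.range (fun ν : ↥(↑(C l) : Set (Fin N)) => ψ ν.1) = ⇑ψ '' ↑(C l) := by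
      rw [← Set.image_eq_range]
    rw [show W l = Submodule.span ℝ (⇑ψ '' ↑(C l)) from rfl, ← hsp,
      finrank_span_eq_card hli]
    simp [hm]
  -- the two functional vectors
  set a : ℝ → EuclideanSpace ℝ (Fin N) := fun l => ∑ ν ∈ C l, ψ ν u • ψ ν with ha
  set b : ℝ → EuclideanSpace ℝ (Fin N) := fun l => ∑ ν ∈ C l, ψ ν v • ψ ν with hb
  have haW : ∀ l, a l ∈ W l := by
    intro l
    exact Submodule.sum_smul_mem _ _ fun ν hν =>
      Submodule.subset_span ⟨ν, by simpa using hν, rfl⟩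
  have hbW : ∀ l, b l ∈ W l := by
    intro l
    exact Submodule.sum_smul_mem _ _ fun ν hν =>
      Submodule.subset_span ⟨ν, by simpa using hν, rfl⟩
  -- inner products with basis elements
  have hbase : ∀ (l : ℝ) (w : Fin N) (μ : Fin N), μ ∈ C l →
      ⟪(∑ ν ∈ C l, ψ ν w • ψ ν : EuclideanSpace ℝ (Fin N)), ψ μ⟫ = ψ μ w := by
    intro l w μ hμ
    rw [sum_inner]
    rw [Finset.sum_congr rfl fun ν _ => real_inner_smul_left (ψ ν) (ψ μ) (ψ ν w)]
    rw [Finset.sum_eq_single μ]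
    · rw [orthonormal_iff_ite.mp ψ.orthonormal μ μ]
      simp
    · intro ν _ hνμ
      rw [orthonormal_iff_ite.mp ψ.orthonormal ν μ]
      simp [hνμ]
    · intro h
      exact absurd hμ h
  -- linear functionals given by inner products with a, b
  have hau : ∀ (l : ℝ) (x : EuclideanSpace ℝ (Fin N)), x ∈ W l → ⟪a l, x⟫ = x u := by
    intro l x hx
    induction hx using Submodule.span_induction with
    | mem y hy =>
        obtain ⟨μ, hμ, rfl⟩ := hy
        exact hbase l u μ (by simpa using hμ)
    | zero => simp
    | add y z hy hz ihy ihz => rw [inner_add_right, ihy, ihz]; rfl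
    | smul r y hy ihy => rw [real_inner_smul_right, ihy]; rfl
  have hbv : ∀ (l : ℝ) (x : EuclideanSpace ℝ (Fin N)), x ∈ W l → ⟪b l, x⟫ = x v := by
    intro l x hx
    induction hx using Submodule.span_induction with
    | mem y hy =>
        obtain ⟨μ, hμ, rfl⟩ := hy
        exact hbase l v μ (by simpa using hμ)
    | zero => simp
    | add y z hy hz ihy ihz => rw [inner_add_right, ihy, ihz]; rfl
    | smul r y hy ihy => rw [real_inner_smul_right, ihy]; rfl
  -- the orthogonality ⟪a+b, a-b⟫ = 0
  have hcd : ∀ l : ℝ, ⟪a l + b l, a l - b l⟫ = 0 := by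
    intro l
    have h1 : ⟪a l + b l, a l - b l⟫ = ⟪a l, a l⟫ - ⟪b l, b l⟫ := by
      rw [inner_add_left, inner_sub_right, inner_sub_right,
        real_inner_comm (b l) (a l)]
      ring
    have h2 : ⟪a l, a l⟫ = ∑ ν ∈ C l, ψ ν u * ψ ν u := by
      rw [show a l = ∑ ν ∈ C l, ψ ν u • ψ ν from rfl]
      rw [inner_sum]
      refine Finset.sum_congr rfl fun μ hμ => ?_
      rw [real_inner_smul_right, hbase l u μ hμ]    -- wrong: inner (a l) (ψ μ)
    have h3 : ⟪b l, b l⟫ = ∑ ν ∈ C l, ψ ν v * ψ ν v := by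
      rw [show b l = ∑ ν ∈ C l, ψ ν v • ψ ν from rfl]
      rw [inner_sum]
      refine Finset.sum_congr rfl fun μ hμ => ?_
      rw [real_inner_smul_right, hbase l v μ hμ]
    rw [h1, h2, h3, ← Finset.sum_sub_distrib]
    exact hclass l
  -- eigenvector property on W l
  have heigW : ∀ (l : ℝ) (x : EuclideanSpace ℝ (Fin N)), x ∈ W l →
      Matrix.toEuclideanLin H x = l • x := by
    intro l x hx
    induction hx using Submodule.span_induction with
    | mem y hy =>
        obtain ⟨μ, hμ, rfl⟩ := hy
        have hl : lam μ = l := (hmemC l μ).mp (by simpa using hμ)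
        have h := heig μ
        rw [hl] at h
        exact congrArg (WithLp.toLp 2) h
    | zero => simp
    | add y z hy hz ihy ihz => rw [map_add, ihy, ihz, smul_add]
    | smul r y hy ihy => rw [map_smul, ihy, smul_comm]
  -- orthogonality between distinct eigenspaces
  have horth : ∀ (l₁ l₂ : ℝ), l₁ ≠ l₂ → ∀ x ∈ W l₁, ∀ y ∈ W l₂, ⟪x, y⟫ = 0 := by
    intro l₁ l₂ hne x hx y hy
    have : W l₁ ⟂ W l₂ := by
      rw [show W l₁ = Submodule.span ℝ (⇑ψ '' ↑(C l₁)) from rfl,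
        show W l₂ = Submodule.span ℝ (⇑ψ '' ↑(C l₂)) from rfl,
        Submodule.isOrtho_span]
      rintro x₁ ⟨ν₁, hν₁, rfl⟩ x₂ ⟨ν₂, hν₂, rfl⟩
      have h1 : lam ν₁ = l₁ := (hmemC l₁ ν₁).mp (by simpa using hν₁)
      have h2 : lam ν₂ = l₂ := (hmemC l₂ ν₂).mp (by simpa using hν₂)
      have : ν₁ ≠ ν₂ := fun h => hne (h1 ▸ h2 ▸ h ▸ rfl)
      rw [orthonormal_iff_ite.mp ψ.orthonormal ν₁ ν₂, if_neg this]
    exact this.inner_eq hx hy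
  -- choose the adapted families
  have hcore : ∀ l : ℝ, ∃ φ' : Fin (m l) → EuclideanSpace ℝ (Fin N),
      (∀ i, φ' i ∈ W l) ∧ Orthonormal ℝ φ' ∧
      (∀ i, ⟪a l + b l, φ' i⟫ = 0 ∨ ⟪a l - b l, φ' i⟫ = 0) ∧
      (∀ i j, i ≠ j → ⟪a l + b l, φ' i⟫ ≠ 0 → ⟪a l + b l, φ' j⟫ = 0) ∧
      (∀ i j, i ≠ j → ⟪a l - b l, φ' i⟫ ≠ 0 → ⟪a l - b l, φ' j⟫ = 0) := fun l =>
    core (W l) (hrank l) (a l + b l) (a l - b l)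
      (Submodule.add_mem _ (haW l) (hbW l)) (Submodule.sub_mem _ (haW l) (hbW l)) (hcd l)
  choose Φ hΦW hΦON hΦpar hΦc hΦd using hcore
  -- indexing within classes
  have hmemself : ∀ ν : Fin N, ν ∈ C (lam ν) := fun ν => (hmemC _ ν).mpr rfl
  set idx : ∀ (l : ℝ) (ν : Fin N), lam ν = l → Fin (m l) :=
    (fun l ν h => (Finset.orderIsoOfFin (C l) rfl).symm ⟨ν, (hmemC l ν).mpr h⟩) with hidx
  have idx_inj : ∀ (l : ℝ) (ν μ : Fin N) (hν : lam ν = l) (hμ : lam μ = l),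
      idx l ν hν = idx l μ hμ → ν = μ := by
    intro l ν μ hν hμ h
    rw [hidx] at h
    have h2 := congrArg (Finset.orderIsoOfFin (C l) rfl) h
    rw [OrderIso.apply_symm_apply, OrderIso.apply_symm_apply] at h2
    exact congrArg Subtype.val h2
  set φfin : Fin N → EuclideanSpace ℝ (Fin N) :=
    (fun ν => Φ (lam ν) (idx (lam ν) ν rfl)) with hφfin
  have phi_eq : ∀ (l : ℝ) (ν : Fin N) (h : lam ν = l), φfin ν = Φ l (idx l ν h) := by
    intro l ν h
    subst h
    rfl
  have phi_memW : ∀ ν : Fin N, φfin ν ∈ W (lam ν) := fun ν => hΦW (lam ν) _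
  -- inner products of φfin with the parity functionals
  have hceval : ∀ (l : ℝ) (x : EuclideanSpace ℝ (Fin N)), x ∈ W l →
      ⟪a l + b l, x⟫ = x u + x v := by
    intro l x hx
    rw [inner_add_left, hau l x hx, hbv l x hx]
  have hdeval : ∀ (l : ℝ) (x : EuclideanSpace ℝ (Fin N)), x ∈ W l →
      ⟪a l - b l, x⟫ = x u - x v := by
    intro l x hx
    rw [inner_sub_left, hau l x hx, hbv l x hx]
  -- dot product is the inner product
  have hdot : ∀ x y : EuclideanSpace ℝ (Fin N),
      dotProduct (x : Fin N → ℝ) (y : Fin N → ℝ) = ⟪x, y⟫ := by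
    intro x y
    simp [dotProduct, PiLp.inner_apply, RCLike.inner_apply, mul_comm]
  refine ⟨fun ν => (φfin ν : Fin N → ℝ), lam, ?_, ?_, ?_, ?_, ?_⟩
  · -- orthonormality
    intro ν μ
    rw [hdot]
    by_cases hl : lam ν = lam μ
    · rw [phi_eq (lam ν) ν rfl, phi_eq (lam ν) μ hl.symm,
        orthonormal_iff_ite.mp (hΦON (lam ν))]
      by_cases hνμ : ν = μ
      · subst hνμ; simp
      · rw [if_neg (fun h => hνμ (idx_inj (lam ν) ν μ rfl hl.symm h)), if_neg hνμ]
    · have h0 : ⟪φfin ν, φfin μ⟫ = 0 :=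
        horth _ _ hl _ (phi_memW ν) _ (phi_memW μ)
      rw [h0, if_neg (fun h => hl (by rw [h]))]
  · -- eigenvector property
    intro ν
    exact congrArg WithLp.ofLp (heigW (lam ν) _ (phi_memW ν))
  · -- parity
    intro ν
    have hmem := phi_memW ν
    rcases hΦpar (lam ν) (idx (lam ν) ν rfl) with h | h
    · right
      rw [show Φ (lam ν) (idx (lam ν) ν rfl) = φfin ν from rfl, hceval _ _ hmem] at h
      linarith
    · left
      rw [show Φ (lam ν) (idx (lam ν) ν rfl) = φfin ν from rfl, hdeval _ _ hmem] at h
      linarith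
  · -- at most one even
    intro ν μ hne hl h1
    rintro ⟨h2, h3⟩
    beta_reduce at h1 h2 h3
    have hij : idx (lam ν) ν rfl ≠ idx (lam ν) μ hl.symm :=
      fun h => hne (idx_inj (lam ν) ν μ rfl hl.symm h)
    have hcν : ⟪a (lam ν) + b (lam ν), Φ (lam ν) (idx (lam ν) ν rfl)⟫ ≠ 0 := by
      rw [show Φ (lam ν) (idx (lam ν) ν rfl) = φfin ν from rfl, hceval _ _ (phi_memW ν)]
      rw [← h1.1]
      intro h
      exact h1.2 (by linarith)
    have := hΦc (lam ν) _ _ hij hcν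
    rw [← phi_eq (lam ν) μ hl.symm] at this
    rw [hceval _ _ (by rw [hl]; exact phi_memW μ)] at this
    rw [← h2] at this
    exact h3 (by linarith)
  · -- at most one odd
    intro ν μ hne hl h1
    rintro ⟨h2, h3⟩
    beta_reduce at h1 h2 h3
    have hij : idx (lam ν) ν rfl ≠ idx (lam ν) μ hl.symm :=
      fun h => hne (idx_inj (lam ν) ν μ rfl hl.symm h)
    have hdν : ⟪a (lam ν) - b (lam ν), Φ (lam ν) (idx (lam ν) ν rfl)⟫ ≠ 0 := by
      rw [show Φ (lam ν) (idx (lam ν) ν rfl) = φfin ν from rfl, hdeval _ _ (phi_memW ν)]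
      rw [h1.1]
      intro h
      exact h1.2 (by rw [h1.1]; linarith)
    have := hΦd (lam ν) _ _ hij hdν
    rw [← phi_eq (lam ν) μ hl.symm] at this
    rw [hdeval _ _ (by rw [hl]; exact phi_memW μ)] at this
    rw [h2] at this
    exact h3 (by rw [h2]; linarith)
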